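/- In the game with rules a → ε, a^2 → ε, b → ε over {a,b}, with S(w) = (2k + 2α_1 + α_2) mod 4 as defined from the block decomposition w = a^{i_0} b ⋯ b a^{i_k} (α_r counting blocks with i_j ≡ r mod 3), every legal move strictly changes S(w) mod 4; i.e., if w → w' in one move then S(w') ≠ S(w). -/

import Mathlib

inductive AB | a | b
deriving DecidableEq

/-- One move of the game `{a → ε, a² → ε, b → ε}`. -/
def Step (w w' : List AB) : Prop :=
  ∃ x y : List AB, w' = x ++ y ∧
    (w = x ++ [AB.a] ++ y ∨ w = x ++ [AB.a, AB.a] ++ y ∨ w = x ++ [AB.b] ++ y)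

/-- The lengths `i_0, …, i_k` of the (possibly empty) maximal blocks of `a`'s in
the decomposition `w = a^{i_0} b a^{i_1} b ⋯ b a^{i_k}`. -/
def blocks (w : List AB) : List ℕ := (w.splitOn AB.b).map List.length

/-- `α_r`: the number of blocks of `a`'s whose length is `≡ r (mod 3)`. -/
def alpha (w : List AB) (r : ℕ) : ℕ := (blocks w).countP (fun i => i % 3 == r)

/-- `S(w) = (2k + 2α₁ + α₂) mod 4`, where `k = |w|_b`. -/
def S (w : List AB) : ℕ := (2 * w.count AB.b + 2 * alpha w 1 + alpha w 2) % 4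

/-! ### Auxiliary machinery -/

open Fin.NatCast

def ff : Fin 3 → ZMod 4 := ![0, 2, 1]

def dd : AB → Fin 3 × ZMod 4 → Fin 3 × ZMod 4
  | AB.b, (_, v) => (0, v + 2)
  | AB.a, (r, v) => (r + 1, v + ff (r + 1) - ff r)

def st (w : List AB) : Fin 3 × ZMod 4 := w.foldr dd (0, 2)

def Rset : List (Fin 3 × Fin 3 × ZMod 4) :=
  [(0,0,1),(0,0,2),(0,0,3),(0,1,2),(0,2,2),(0,2,3),(1,0,1),(1,0,2),(1,1,1),
   (1,1,2),(1,1,3),(1,2,1),(2,0,1),(2,1,2),(2,1,3),(2,2,1),(2,2,2),(2,2,3)]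

def R (s t : Fin 3 × ZMod 4) : Prop := (s.1, t.1, s.2 - t.2) ∈ Rset

instance (s t : Fin 3 × ZMod 4) : Decidable (R s t) := by unfold R; infer_instance

lemma R_closed : ∀ c : AB, ∀ s t : Fin 3 × ZMod 4, R s t → R (dd c s) (dd c t) := by
  intro c; cases c <;> decide

lemma R_ne : ∀ s t : Fin 3 × ZMod 4, R s t → s.2 ≠ t.2 := by decide

lemma R_base : ∀ t : Fin 3 × ZMod 4,
    R (dd AB.a t) t ∧ R (dd AB.a (dd AB.a t)) t ∧ R (dd AB.b t) t := by decide

lemma R_fold : ∀ x : List AB, ∀ s t : Fin 3 × ZMod 4, R s t →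
    R (x.foldr dd s) (x.foldr dd t) := by
  intro x
  induction x with
  | nil => intro s t h; exact h
  | cons c x ih => intro s t h; exact R_closed c _ _ (ih s t h)

lemma blocks_b (w : List AB) : blocks (AB.b :: w) = 0 :: blocks w := by
  unfold blocks List.splitOn
  rw [List.splitOnP_cons]
  simp

lemma blocks_ne_nil (w : List AB) : blocks w ≠ [] := by
  unfold blocks List.splitOn
  simp [List.splitOnP_ne_nil]

lemma blocks_cons (w : List AB) : ∃ h t, blocks w = h :: t := by
  cases hb : blocks w with
  | nil => exact absurd hb (blocks_ne_nil w)
  | cons h t => exact ⟨h, t, rfl⟩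

lemma blocks_a (w : List AB) (h : ℕ) (t : List ℕ) (hb : blocks w = h :: t) :
    blocks (AB.a :: w) = (h + 1) :: t := by
  unfold blocks List.splitOn at *
  rw [List.splitOnP_cons]
  have hab : (AB.a == AB.b) = false := rfl
  simp only [hab, Bool.false_eq_true, if_false]
  cases hc : List.splitOnP (· == AB.b) w with
  | nil => rw [hc] at hb; simp at hb
  | cons u us =>
    rw [hc] at hb
    simp only [List.map_cons, List.cons.injEq] at hb
    simp [List.modifyHead, hb.1.symm, hb.2.symm, Nat.add_comm]

def ffn (i : ℕ) : ZMod 4 := ff (i : Fin 3)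

def FSum (L : List ℕ) : ZMod 4 := (L.map ffn).sum

lemma st_spec : ∀ w : List AB,
    (st w).1 = ((blocks w).headI : Fin 3) ∧
    (st w).2 = 2 * (w.count AB.b : ZMod 4) + FSum (blocks w) + 2 := by
  intro w
  induction w with
  | nil =>
    constructor
    · rfl
    · show (2 : ZMod 4) = 2 * ((0:ℕ) : ZMod 4) + FSum [0] + 2
      simp [FSum, ffn, ff]
  | cons c w ih =>
    obtain ⟨hfst, hsnd⟩ := ih
    cases c with
    | b =>
      constructor
      · show (0 : Fin 3) = _
        rw [blocks_b]; rfl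
      · show (st w).2 + 2 = _
        rw [blocks_b]
        simp only [List.count_cons, FSum, List.map_cons, List.sum_cons] at *
        rw [hsnd]
        have h0 : ffn 0 = 0 := rfl
        rw [h0]
        norm_num
        ring
    | a =>
      obtain ⟨h, t, hb⟩ := blocks_cons w
      rw [hb] at hfst hsnd
      constructor
      · show ((st w).1 + 1) = _
        rw [blocks_a w h t hb, hfst]
        simp only [List.headI, Nat.cast_add, Nat.cast_one]
      · show (st w).2 + ff ((st w).1 + 1) - ff (st w).1 = _
        rw [blocks_a w h t hb, hfst, hsnd]
        simp only [List.count_cons, FSum, List.map_cons, List.sum_cons]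
        have hcast : ((h + 1 : ℕ) : Fin 3) = ((h : ℕ) : Fin 3) + 1 := by push_cast; ring
        have hffn : ffn (h + 1) = ff ((h : Fin 3) + 1) := by rw [ffn, hcast]
        have hffn' : ffn h = ff ((h : Fin 3)) := rfl
        rw [hffn, hffn']
        have hcount : (AB.a == AB.b) = false := rfl
        rw [hcount]
        norm_num
        ring

lemma fin3_cast_mod (i : ℕ) : ((i : Fin 3)) = ((i % 3 : ℕ) : Fin 3) := by
  apply Fin.ext
  simp only [Fin.val_natCast]
  omega

lemma FSum_eq : ∀ L : List ℕ,
    FSum L = 2 * ((L.countP fun i => i % 3 == 1 : ℕ) : ZMod 4) +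
      ((L.countP fun i => i % 3 == 2 : ℕ) : ZMod 4) := by
  intro L
  induction L with
  | nil => simp [FSum]
  | cons i L ih =>
    simp only [FSum, List.map_cons, List.sum_cons, List.countP_cons] at *
    rw [ih]
    have hi : ffn i = ff ((i % 3 : ℕ) : Fin 3) := by rw [ffn, fin3_cast_mod]
    have h : i % 3 = 0 ∨ i % 3 = 1 ∨ i % 3 = 2 := by omega
    rcases h with h | h | h <;> rw [h] at hi ⊢ <;>
      simp only [hi, show ff ((2 : ℕ) : Fin 3) = 1 from rfl] <;> norm_num [ff] <;> ring

lemma S_cast (w : List AB) : ((S w : ℕ) : ZMod 4) = (st w).2 - 2 := by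
  obtain ⟨_, hsnd⟩ := st_spec w
  rw [hsnd]
  unfold S alpha
  rw [ZMod.natCast_mod, FSum_eq]
  push_cast
  ring

theorem stmt11 : ∀ w w' : List AB, Step w w' → S w' ≠ S w := by
  intro w w' ⟨x, y, hw', hc⟩
  have key : R (st w) (st w') := by
    subst hw'
    have base := R_base (st y)
    rcases hc with h | h | h <;> subst h <;>
      show R (List.foldr dd (0,2) (_ ++ _)) (List.foldr dd (0,2) (x ++ y)) <;>
      rw [List.foldr_append, List.foldr_append, List.foldr_append] <;>
      apply R_fold <;>
      simp only [List.foldr_cons, List.foldr_nil]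
    · exact base.1
    · exact base.2.1
    · exact base.2.2
  intro h
  have h2 : ((S w' : ℕ) : ZMod 4) = ((S w : ℕ) : ZMod 4) := by rw [h]
  rw [S_cast, S_cast] at h2
  exact R_ne _ _ key (by linear_combination h2.symm)
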